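/- arXiv:2210.09350 — 2 statements merged into one kernel-verified Lean document; each statement's English description precedes it below -/
import Mathlib

section
/- If r is a square root on a pseudo MV-algebra M, then the image of r equals the interval [r(0), 1]; more generally, for a ≤ b in M, r([a,b]) = [r(a), r(b)]. -/
/-- A pseudo MV-algebra `(M; ⊕, ⁻, ∼, 0, 1)` satisfying axioms (A1)–(A8),
with `x ⊙ y := (y⁻ ⊕ x⁻)∼`. -/
class PseudoMV (M : Type*) where
  oplus : M → M → M
  lneg : M → M
  rneg : M → M
  zero : M
  one : M
  oplus_assoc : ∀ x y z : M, oplus x (oplus y z) = oplus (oplus x y) z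
  oplus_zero : ∀ x : M, oplus x zero = x
  zero_oplus : ∀ x : M, oplus zero x = x
  oplus_one : ∀ x : M, oplus x one = one
  one_oplus : ∀ x : M, oplus one x = one
  lneg_one : lneg one = zero
  rneg_one : rneg one = zero
  a5 : ∀ x y : M, rneg (oplus (lneg x) (lneg y)) = lneg (oplus (rneg x) (rneg y))
  a6₁ : ∀ x y : M,
    oplus x (rneg (oplus (lneg y) (lneg (rneg x)))) =
      oplus y (rneg (oplus (lneg x) (lneg (rneg y))))
  a6₂ : ∀ x y : M,
    oplus x (rneg (oplus (lneg y) (lneg (rneg x)))) =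
      oplus (rneg (oplus (lneg (lneg y)) (lneg x))) y
  a6₃ : ∀ x y : M,
    oplus x (rneg (oplus (lneg y) (lneg (rneg x)))) =
      oplus (rneg (oplus (lneg (lneg x)) (lneg y))) x
  a7 : ∀ x y : M,
    rneg (oplus (lneg (oplus (lneg x) y)) (lneg x)) =
      rneg (oplus (lneg y) (lneg (oplus x (rneg y))))
  a8 : ∀ x : M, rneg (lneg x) = x

namespace PseudoMV

variable {M : Type*} [PseudoMV M]

/-- `x ⊙ y := (y⁻ ⊕ x⁻)∼`. -/
def mul (x y : M) : M := rneg (oplus (lneg y) (lneg x))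

/-- `x ∨ y = x ⊕ (x∼ ⊙ y)` (axiom (A6)). -/
def sup (x y : M) : M := oplus x (mul (rneg x) y)

/-- `x ∧ y = x ⊙ (x⁻ ⊕ y)` (axiom (A7)). -/
def inf (x y : M) : M := mul x (oplus (lneg x) y)

/-- The lattice order of a pseudo MV-algebra. -/
def le (x y : M) : Prop := sup x y = y

/-- `x → y := x⁻ ⊕ y`. -/
def arrow (x y : M) : M := oplus (lneg x) y

/-- `x ⇝ y := y ⊕ x∼`. -/
def squig (x y : M) : M := oplus y (rneg x)

/-- A weak square root: (Sq1) and (Sq2). -/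
def IsWeakSqrt (r : M → M) : Prop :=
  (∀ x : M, mul (r x) (r x) = x) ∧
  (∀ x y : M, le (mul y y) x → le y (r x))

/-- A square root: (Sq1), (Sq2) and (Sq3). -/
def IsSqrt (r : M → M) : Prop :=
  IsWeakSqrt r ∧
  (∀ x : M, r (lneg x) = arrow (r x) (r zero) ∧ r (rneg x) = squig (r x) (r zero))

end PseudoMV

open PseudoMV
namespace PseudoMV

variable {M : Type*} [PseudoMV M]

lemma lr (x : M) : lneg (rneg x) = x := by
  have h := a5 (one : M) x
  simp only [lneg_one, rneg_one, zero_oplus] at h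
  rw [← h, a8]

lemma lneg_zero' : lneg (zero : M) = one := by rw [← rneg_one, lr]

lemma rneg_zero' : rneg (zero : M) = one := by rw [← lneg_one, a8]

lemma mul_one' (x : M) : mul x one = x := by
  show rneg (oplus (lneg one) (lneg x)) = x
  rw [lneg_one, zero_oplus, a8]

lemma one_mul' (x : M) : mul one x = x := by
  show rneg (oplus (lneg x) (lneg one)) = x
  rw [lneg_one, oplus_zero, a8]

lemma lneg_oplus (x y : M) : lneg (oplus x y) = mul (lneg y) (lneg x) := by
  show _ = rneg (oplus (lneg (lneg x)) (lneg (lneg y)))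
  rw [a5, a8, a8]

lemma rneg_oplus' (x y : M) : rneg (oplus x y) = mul (rneg y) (rneg x) := by
  show _ = rneg (oplus (lneg (rneg x)) (lneg (rneg y)))
  rw [lr, lr]

lemma oplus_rneg_self (x : M) : oplus x (rneg x) = one := by
  have h := a6₂ x one
  simp only [lneg_one, zero_oplus, a8, oplus_one] at h
  exact h

lemma oplus_lneg_self (x : M) : oplus (lneg x) x = one := by
  have h := a6₃ x one
  simp only [lneg_one, zero_oplus, oplus_zero, a8, oplus_rneg_self] at h
  exact h.symm

lemma mul_lneg_self (x : M) : mul x (lneg x) = zero := by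
  show rneg (oplus (lneg (lneg x)) (lneg x)) = zero
  rw [oplus_lneg_self, rneg_one]

lemma mul_rneg_self (x : M) : mul (rneg x) x = zero := by
  show rneg (oplus (lneg x) (lneg (rneg x))) = zero
  rw [lr, oplus_lneg_self, rneg_one]

lemma sup_comm' (x y : M) : sup x y = sup y x := by
  show oplus x (rneg (oplus (lneg y) (lneg (rneg x)))) =
    oplus y (rneg (oplus (lneg x) (lneg (rneg y))))
  exact a6₁ x y

lemma sup_form3 (x y : M) : sup x y = oplus (mul x (lneg y)) y := by
  show oplus x (rneg (oplus (lneg y) (lneg (rneg x)))) =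
    oplus (rneg (oplus (lneg (lneg y)) (lneg x))) y
  exact a6₂ x y

lemma sup_form4 (x y : M) : sup x y = oplus (mul y (lneg x)) x := by
  show oplus x (rneg (oplus (lneg y) (lneg (rneg x)))) =
    oplus (rneg (oplus (lneg (lneg x)) (lneg y))) x
  exact a6₃ x y

lemma inf_form2 (x y : M) : inf x y = mul (oplus x (rneg y)) y := by
  show rneg (oplus (lneg (oplus (lneg x) y)) (lneg x)) =
    rneg (oplus (lneg y) (lneg (oplus x (rneg y))))
  exact a7 x y

lemma le_iff_lo (x y : M) : le x y ↔ oplus (lneg x) y = one := by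
  constructor
  · intro h
    have h' : oplus x (mul (rneg x) y) = y := h
    calc oplus (lneg x) y = oplus (lneg x) (oplus x (mul (rneg x) y)) := by rw [h']
      _ = oplus (oplus (lneg x) x) (mul (rneg x) y) := oplus_assoc _ _ _
      _ = one := by rw [oplus_lneg_self, one_oplus]
  · intro h
    have hm : mul (rneg y) x = zero := by
      show rneg (oplus (lneg x) (lneg (rneg y))) = zero
      rw [lr, h, rneg_one]
    show sup x y = y
    rw [sup_comm']
    show oplus y (mul (rneg y) x) = y
    rw [hm, oplus_zero]

lemma le_iff_or (x y : M) : le x y ↔ oplus y (rneg x) = one := by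
  constructor
  · intro h
    have h' : oplus (mul y (lneg x)) x = y := (sup_form4 x y).symm.trans h
    calc oplus y (rneg x) = oplus (oplus (mul y (lneg x)) x) (rneg x) := by rw [h']
      _ = oplus (mul y (lneg x)) (oplus x (rneg x)) := (oplus_assoc _ _ _).symm
      _ = one := by rw [oplus_rneg_self, oplus_one]
  · intro h
    have hm : mul x (lneg y) = zero := by
      show rneg (oplus (lneg (lneg y)) (lneg x)) = zero
      have : lneg (oplus y (rneg x)) = (zero : M) := by rw [h, lneg_one]
      rw [lneg_oplus] at this
      show rneg (oplus (lneg (lneg y)) (lneg x)) = zero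
      calc rneg (oplus (lneg (lneg y)) (lneg x))
          = mul (lneg (rneg x)) (lneg y) := by rw [lr]; rfl
        _ = zero := this
    show sup x y = y
    rw [sup_form3, hm, zero_oplus]

lemma le_refl' (x : M) : le x x := by
  show oplus x (mul (rneg x) x) = x
  rw [mul_rneg_self, oplus_zero]

lemma le_top' (x : M) : le x one := (le_iff_lo _ _).2 (oplus_one _)

lemma bot_le' (x : M) : le zero x := (le_iff_lo _ _).2 (by rw [lneg_zero', one_oplus])

lemma le_trans' {x y z : M} (h1 : le x y) (h2 : le y z) : le x z := by
  rw [le_iff_lo] at h1 ⊢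
  have hz : oplus y (mul (rneg y) z) = z := h2
  calc oplus (lneg x) z = oplus (lneg x) (oplus y (mul (rneg y) z)) := by rw [hz]
    _ = oplus (oplus (lneg x) y) (mul (rneg y) z) := oplus_assoc _ _ _
    _ = one := by rw [h1, one_oplus]

lemma le_antisymm' {x y : M} (h1 : le x y) (h2 : le y x) : x = y := by
  have hx : sup y x = x := h2
  have hy : sup x y = y := h1
  rw [← hx, sup_comm', hy]

lemma le_oplus_right (u c : M) : le u (oplus u c) :=
  (le_iff_lo _ _).2 (by rw [oplus_assoc, oplus_lneg_self, one_oplus])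

lemma le_oplus_left (u d : M) : le u (oplus d u) :=
  (le_iff_or _ _).2 (by rw [← oplus_assoc, oplus_rneg_self, oplus_one])

lemma oplus_le_oplus_left {x y : M} (a : M) (h : le x y) : le (oplus a x) (oplus a y) := by
  have hy : oplus x (mul (rneg x) y) = y := h
  rw [← hy, oplus_assoc]
  exact le_oplus_right _ _

lemma oplus_le_oplus_right {x y : M} (h : le x y) (a : M) : le (oplus x a) (oplus y a) := by
  have hy : oplus (mul y (lneg x)) x = y := (sup_form4 x y).symm.trans h
  rw [← hy, ← oplus_assoc]
  exact le_oplus_left _ _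

lemma lneg_le_lneg {x y : M} (h : le x y) : le (lneg y) (lneg x) := by
  rw [le_iff_or, a8]
  exact (le_iff_lo _ _).1 h

lemma rneg_le_rneg {x y : M} (h : le x y) : le (rneg y) (rneg x) := by
  rw [le_iff_lo, lr]
  exact (le_iff_or _ _).1 h

lemma mul_le_mul_left' (a : M) {x y : M} (h : le x y) : le (mul a x) (mul a y) := by
  show le (rneg (oplus (lneg x) (lneg a))) (rneg (oplus (lneg y) (lneg a)))
  exact rneg_le_rneg (oplus_le_oplus_right (lneg_le_lneg h) _)

lemma mul_le_mul_right' {x y : M} (h : le x y) (a : M) : le (mul x a) (mul y a) := by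
  show le (rneg (oplus (lneg a) (lneg x))) (rneg (oplus (lneg a) (lneg y)))
  exact rneg_le_rneg (oplus_le_oplus_left _ (lneg_le_lneg h))

lemma mul_le_left (a b : M) : le (mul a b) a := by
  have h := mul_le_mul_left' a (le_top' b)
  rwa [mul_one'] at h

lemma mul_le_right (a b : M) : le (mul a b) b := by
  have h := mul_le_mul_right' (le_top' a) b
  rwa [one_mul'] at h

lemma le_sup_left' (x y : M) : le x (sup x y) := le_oplus_right x _

lemma le_sup_right' (x y : M) : le y (sup x y) := by
  rw [sup_form3]
  exact le_oplus_left y _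

lemma sup_le' {b c v : M} (h1 : le b v) (h2 : le c v) : le (sup b c) v := by
  have step : le (sup b c) (sup b v) :=
    oplus_le_oplus_left b (mul_le_mul_left' (rneg b) h2)
  rwa [show sup b v = v from h1] at step

lemma inf_le_left' (x y : M) : le (inf x y) x := mul_le_left x _

lemma inf_le_right' (x y : M) : le (inf x y) y := by
  rw [inf_form2]
  exact mul_le_right _ _

lemma le_inf' {v b c : M} (h1 : le v b) (h2 : le v c) : le v (inf b c) := by
  have k : le (mul (oplus v (rneg v)) v) (mul (oplus b (rneg v)) v) :=
    mul_le_mul_right' (oplus_le_oplus_right h1 _) v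
  rw [oplus_rneg_self, one_mul'] at k
  have hbv : inf b v = v := by
    apply le_antisymm' (inf_le_right' b v)
    rw [inf_form2]
    exact k
  have step : le (inf b v) (inf b c) :=
    mul_le_mul_left' b (oplus_le_oplus_left (lneg b) h2)
  rwa [hbv] at step

lemma inf_eq_left {x y : M} (h : le x y) : inf x y = x :=
  le_antisymm' (inf_le_left' _ _) (le_inf' (le_refl' x) h)

lemma lneg_sup (w y : M) : sup (lneg w) y = oplus (lneg w) (mul w y) := by
  show oplus (lneg w) (mul (rneg (lneg w)) y) = _
  rw [a8]

lemma mul_sup_distrib_left (X b c : M) :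
    le (mul X (sup b c)) (sup (mul X b) (mul X c)) := by
  set Y := sup (mul X b) (mul X c) with hY
  have hb : le b (oplus (lneg X) Y) := by
    have hb1 : le b (oplus (lneg X) (mul X b)) := by
      rw [← lneg_sup]; exact le_sup_right' _ _
    exact le_trans' hb1 (oplus_le_oplus_left _ (le_sup_left' _ _))
  have hc : le c (oplus (lneg X) Y) := by
    have hc1 : le c (oplus (lneg X) (mul X c)) := by
      rw [← lneg_sup]; exact le_sup_right' _ _
    exact le_trans' hc1 (oplus_le_oplus_left _ (le_sup_right' _ _))
  have h1 : le (mul X (sup b c)) (mul X (oplus (lneg X) Y)) :=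
    mul_le_mul_left' X (sup_le' hb hc)
  exact le_trans' h1 (inf_le_right' X Y)

lemma inf_sup_distrib (a b c : M) :
    le (inf a (sup b c)) (sup (inf a b) (inf a c)) := by
  rw [inf_form2]
  set X := oplus a (rneg (sup b c)) with hX
  have h1 : le (mul X (sup b c)) (sup (mul X b) (mul X c)) := mul_sup_distrib_left X b c
  have hXb : le (mul X b) (inf a b) := by
    rw [inf_form2]
    exact mul_le_mul_right' (oplus_le_oplus_left a (rneg_le_rneg (le_sup_left' b c))) b
  have hXc : le (mul X c) (inf a c) := by
    rw [inf_form2]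
    exact mul_le_mul_right' (oplus_le_oplus_left a (rneg_le_rneg (le_sup_right' b c))) c
  have h2 : le (sup (mul X b) (mul X c)) (sup (inf a b) (inf a c)) :=
    sup_le' (le_trans' hXb (le_sup_left' _ _)) (le_trans' hXc (le_sup_right' _ _))
  exact le_trans' h1 h2

lemma r_mono {r : M → M} (hw : IsWeakSqrt r) {a b : M} (h : le a b) : le (r a) (r b) := by
  apply hw.2 b (r a)
  rw [hw.1 a]
  exact h

lemma r_sq {r : M → M} (hw : IsWeakSqrt r) {z : M} (hz : le (r zero) z) :
    r (mul z z) = z := by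
  set w := r (mul z z) with hwdef
  have hzw : le z w := hw.2 (mul z z) z (le_refl' _)
  have hww : mul w w = mul z z := hw.1 _
  have hwz : mul w z = mul z z := by
    apply le_antisymm'
    · have k := mul_le_mul_left' w hzw
      rwa [hww] at k
    · exact mul_le_mul_right' hzw z
  have hkey : sup (lneg w) z = sup (lneg w) w := by
    rw [lneg_sup, lneg_sup, hwz, hww]
  have hwle : le w (sup (lneg w) z) := by
    rw [hkey]; exact le_sup_right' _ _
  have hinf : inf w (sup (lneg w) z) = w := inf_eq_left hwle
  have hdist := inf_sup_distrib w (lneg w) z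
  rw [hinf] at hdist
  have hc : le (inf w (lneg w)) z := by
    have h0 : le (mul (inf w (lneg w)) (inf w (lneg w))) zero := by
      have k1 : le (mul (inf w (lneg w)) (inf w (lneg w))) (mul w (lneg w)) :=
        le_trans' (mul_le_mul_left' _ (inf_le_right' w (lneg w)))
          (mul_le_mul_right' (inf_le_left' w (lneg w)) _)
      rwa [mul_lneg_self] at k1
    exact le_trans' (hw.2 zero _ h0) hz
  have hfin : le (sup (inf w (lneg w)) (inf w z)) z := sup_le' hc (inf_le_right' _ _)
  exact le_antisymm' (le_trans' hdist hfin) hzw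

end PseudoMV

open PseudoMV

theorem stmt6 {M : Type*} [PseudoMV M] (r : M → M) (hr : IsSqrt r) :
    r '' Set.univ = {z : M | le (r zero) z ∧ le z one} ∧
    (∀ a b : M, le a b →
      r '' {z : M | le a z ∧ le z b} = {z : M | le (r a) z ∧ le z (r b)}) := by
  obtain ⟨hw, -⟩ := hr
  constructor
  · ext z
    simp only [Set.image_univ, Set.mem_range, Set.mem_setOf_eq]
    constructor
    · rintro ⟨x, rfl⟩
      exact ⟨r_mono hw (bot_le' x), le_top' _⟩
    · rintro ⟨h1, -⟩
      exact ⟨mul z z, r_sq hw h1⟩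
  · intro a b hab
    ext y
    simp only [Set.mem_image, Set.mem_setOf_eq]
    constructor
    · rintro ⟨z, ⟨h1, h2⟩, rfl⟩
      exact ⟨r_mono hw h1, r_mono hw h2⟩
    · rintro ⟨h1, h2⟩
      have hs : le (r zero) y := le_trans' (r_mono hw (bot_le' a)) h1
      refine ⟨mul y y, ⟨?_, ?_⟩, r_sq hw hs⟩
      · have k : le (mul (r a) (r a)) (mul y y) :=
          le_trans' (mul_le_mul_left' _ h1) (mul_le_mul_right' h1 _)
        rwa [hw.1] at k
      · have k : le (mul y y) (mul (r b) (r b)) :=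
          le_trans' (mul_le_mul_left' _ h2) (mul_le_mul_right' h2 _)
        rwa [hw.1] at k
end

section
/- Let r be a square root on a pseudo MV-algebra M. Then M is a Boolean algebra (i.e., every element is idempotent) if and only if r(0) = 0. -/
open PseudoMV

section Aux

variable {M : Type*} [PseudoMV M]

lemma pmv_sup_eq (a b : M) :
    sup a b = oplus a (rneg (oplus (lneg b) (lneg (rneg a)))) := rfl

lemma pmv_lneg_rneg (x : M) : lneg (rneg x) = x := by
  have h := a5 x (one : M)
  rw [lneg_one, rneg_one, oplus_zero, oplus_zero, a8] at h
  exact h.symm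

lemma pmv_lneg_oplus (y : M) : oplus (lneg y) y = one := by
  have h := a6₂ (one : M) y
  rw [one_oplus, lneg_one, oplus_zero, a8] at h
  exact h.symm

lemma pmv_oplus_rneg (x : M) : oplus x (rneg x) = one := by
  have h := a6₁ x (one : M)
  rw [one_oplus, lneg_one, zero_oplus, pmv_lneg_rneg] at h
  exact h

lemma pmv_le_mul_self (x : M) : le (mul x x) x := by
  show sup (mul x x) x = x
  rw [pmv_sup_eq, a6₂]
  have hu : lneg (mul x x) = oplus (lneg x) (lneg x) := by
    rw [show mul x x = rneg (oplus (lneg x) (lneg x)) from rfl, pmv_lneg_rneg]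
  rw [hu, oplus_assoc, pmv_lneg_oplus, one_oplus, rneg_one, zero_oplus]

lemma pmv_le_oplus_self (a : M) : le a (oplus a a) := by
  show sup a (oplus a a) = oplus a a
  rw [pmv_sup_eq, a6₂]
  have h5 := a5 (lneg (oplus a a)) a
  rw [a8] at h5
  rw [h5, ← oplus_assoc, pmv_oplus_rneg, oplus_one, lneg_one, zero_oplus]

lemma pmv_le_antisymm {x y : M} (h1 : le x y) (h2 : le y x) : x = y := by
  have hc := a6₁ x y
  simp only [le] at h1 h2
  rw [pmv_sup_eq] at h1 h2
  rw [h1, h2] at hc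
  exact hc.symm

end Aux

theorem stmt11 {M : Type*} [PseudoMV M] (r : M → M) (hr : IsSqrt r) :
    (∀ x : M, oplus x x = x) ↔ r zero = zero := by
  obtain ⟨⟨hsq1, hsq2⟩, hsq3⟩ := hr
  constructor
  · intro hB
    have h := hsq1 zero
    rw [show mul (r zero) (r zero)
        = rneg (oplus (lneg (r zero)) (lneg (r zero))) from rfl, hB, a8] at h
    exact h
  · intro h0 x
    have hr2 : r (rneg x) = rneg (r x) := by
      have h2 := (hsq3 x).2
      rw [h0] at h2
      simp only [squig] at h2
      rw [zero_oplus] at h2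
      exact h2
    have hstar : oplus (r x) (r x) = x := by
      have h1 := hsq1 (rneg x)
      rw [hr2] at h1
      simp only [mul] at h1
      rw [pmv_lneg_rneg] at h1
      have h3 := congrArg lneg h1
      rw [pmv_lneg_rneg, pmv_lneg_rneg] at h3
      exact h3
    have hle1 : le x (r x) := hsq2 x x (pmv_le_mul_self x)
    have hle2 : le (r x) x := by
      have h4 := pmv_le_oplus_self (r x)
      rwa [hstar] at h4
    have hxr : x = r x := pmv_le_antisymm hle1 hle2
    calc oplus x x = oplus (r x) (r x) := by rw [← hxr]
    _ = x := hstar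
end
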